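/- arXiv:1401.8254 — 2 statements merged into one kernel-verified Lean document; each statement's English description precedes it below -/
import Mathlib

section
/- (Maclaurin inequality) For λ in the Gårding cone Γ_m and integers 1 ≤ p ≤ m ≤ n, one has C(n,m)^{−1/m} · H_m(λ)^{1/m} ≤ C(n,p)^{−1/p} · H_p(λ)^{1/p}. -/
/-- `esymm n k v` is the `k`-th elementary symmetric polynomial of
`v = (v 0, …, v (n-1))`, with `esymm n 0 v = 1`. -/
noncomputable def esymm (n k : ℕ) (v : Fin n → ℝ) : ℝ :=
  ∑ s ∈ Finset.univ.powersetCard k, ∏ i ∈ s, v i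

open Polynomial

def RRooted (q : ℝ[X]) : Prop := Multiset.card q.roots = q.natDegree

lemma rrooted_derivative {q : ℝ[X]} (hq : RRooted q) : RRooted (derivative q) := by
  rcases eq_or_ne (derivative q) 0 with h | h
  · rw [RRooted, h]; simp
  have hdeg : q.natDegree ≠ 0 := by
    intro h0
    exact h (by nth_rewrite 1 [eq_C_of_natDegree_eq_zero h0]; simp)
  have h2 := card_roots_le_derivative q
  have h3 := card_roots' (derivative q)
  have h4 := natDegree_derivative_le q
  rw [hq] at h2
  unfold RRooted
  omega

lemma natDegree_derivative_rr {q : ℝ[X]} (hq : RRooted q) (h : q.natDegree ≠ 0) :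
    (derivative q).natDegree = q.natDegree - 1 := by
  refine Nat.le_antisymm (natDegree_derivative_le q) ?_
  have h2 := card_roots_le_derivative q
  have h3 := card_roots' (derivative q)
  rw [hq] at h2
  omega

lemma multiset_prod_reverse (s : Multiset ℝ[X]) :
    s.prod.reverse = (s.map Polynomial.reverse).prod := by
  induction s using Multiset.induction with
  | empty => simp [show ((1:ℝ[X]).reverse = 1) by rw [← C_1, reverse_C]]
  | cons a s ih => simp [Polynomial.reverse_mul_of_domain, ih]

lemma reverse_X_sub_C (r : ℝ) : (X - C r).reverse = 1 - C r * X := by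
  ext n
  rw [coeff_reverse, natDegree_X_sub_C]
  match n with
  | 0 => simp [revAt_le]
  | 1 => simp [revAt_le, coeff_one]
  | (k+2) =>
    rw [Polynomial.revAt_eq_self_of_lt (by omega)]
    simp [coeff_X, coeff_C, coeff_one, sub_eq_zero]

lemma reverse_props {q : ℝ[X]} (hq : RRooted q) (h0 : q.coeff 0 ≠ 0) :
    RRooted q.reverse ∧ q.reverse.natDegree = q.natDegree ∧
      q.reverse.roots = q.roots.map (·⁻¹) := by
  have hqne : q ≠ 0 := fun h => h0 (by simp [h])
  have ha : q.leadingCoeff ≠ 0 := leadingCoeff_ne_zero.2 hqne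
  have hr : ∀ r ∈ q.roots, r ≠ 0 := by
    intro r hrm hr0
    subst hr0
    rw [mem_roots hqne] at hrm
    exact h0 (by rw [coeff_zero_eq_eval_zero]; exact hrm)
  have key : C q.leadingCoeff * (q.roots.map fun a => X - C a).prod = q :=
    C_leadingCoeff_mul_prod_multiset_X_sub_C hq
  have hrev : q.reverse =
      C (q.leadingCoeff * (q.roots.map fun r => -r).prod) *
        ((q.roots.map fun r => r⁻¹).map fun a => X - C a).prod := by
    conv_lhs => rw [← key]
    rw [reverse_mul_of_domain, reverse_C, multiset_prod_reverse, Multiset.map_map]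
    have hcong : ∀ r ∈ q.roots,
        (Polynomial.reverse ∘ fun a => X - C a) r = C (-r) * (X - C r⁻¹) := by
      intro r hrm
      have hrne := hr r hrm
      show (X - C r).reverse = _
      rw [reverse_X_sub_C, mul_sub, ← C_mul,
        show -r * r⁻¹ = -1 by field_simp, map_neg, map_neg, C_1]
      ring
    rw [Multiset.map_congr rfl hcong, Multiset.prod_map_mul, C_mul, mul_assoc,
      show C (Multiset.map (fun r : ℝ => -r) q.roots).prod
          = (Multiset.map (fun x : ℝ => C (-x)) q.roots).prod from by
        induction q.roots using Multiset.induction with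
        | empty => simp
        | cons a s ih => simp only [Multiset.map_cons, Multiset.prod_cons, C_mul, ih],
      Multiset.map_map]
    rfl
  set c := q.leadingCoeff * (q.roots.map fun r => -r).prod with hc
  have hcne : c ≠ 0 := by
    apply mul_ne_zero ha
    apply Multiset.prod_ne_zero
    intro hmem
    rw [Multiset.mem_map] at hmem
    obtain ⟨r, hrm, hr0⟩ := hmem
    exact hr r hrm (neg_eq_zero.mp hr0)
  have hroots : q.reverse.roots = q.roots.map (·⁻¹) := by
    rw [hrev, roots_C_mul _ hcne, roots_multiset_prod_X_sub_C]
  have hdeg : q.reverse.natDegree = q.natDegree := by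
    rw [hrev, natDegree_C_mul hcne, natDegree_multiset_prod_X_sub_C_eq_card,
      Multiset.card_map, hq]
  exact ⟨by rw [RRooted, hroots, hdeg, Multiset.card_map, hq], hdeg, hroots⟩

lemma mesymm_one (s : Multiset ℝ) : s.esymm 1 = s.sum := by
  rw [Multiset.esymm, Multiset.powersetCard_one, Multiset.map_map]
  simp

lemma mesymm_two_cons (a : ℝ) (s : Multiset ℝ) :
    (a ::ₘ s).esymm 2 = a * s.sum + s.esymm 2 := by
  rw [Multiset.esymm, show (2:ℕ) = 1 + 1 from rfl, Multiset.powersetCard_cons,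
    Multiset.map_add, Multiset.sum_add, Multiset.map_map]
  rw [add_comm]
  congr 1
  · rw [Multiset.powersetCard_one, Multiset.map_map]
    have : ∀ x : ℝ, ((Multiset.prod ∘ Multiset.cons a) ∘ singleton) x = a * x := by
      intro x; simp
    rw [Multiset.map_congr rfl fun x _ => this x, Multiset.sum_map_mul_left]
    simp

lemma sum_sq_eq (s : Multiset ℝ) :
    (s.map fun x => x ^ 2).sum = s.sum ^ 2 - 2 * s.esymm 2 := by
  induction s using Multiset.induction with
  | empty =>
    simp [Multiset.esymm, show (2:ℕ) = 1 + 1 from rfl, Multiset.powersetCard_zero_right]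
  | cons a s ih =>
    rw [Multiset.map_cons, Multiset.sum_cons, ih, mesymm_two_cons, Multiset.sum_cons]
    ring

lemma multiset_all_zero (s : Multiset ℝ) (h : ∀ x ∈ s, 0 ≤ x) (hs : s.sum = 0) :
    ∀ x ∈ s, x = 0 := by
  induction s using Multiset.induction with
  | empty => simp
  | cons a s ih =>
    rw [Multiset.sum_cons] at hs
    have ha : 0 ≤ a := h a (Multiset.mem_cons_self a s)
    have hsum : 0 ≤ s.sum := Multiset.sum_nonneg fun x hx => h x (Multiset.mem_cons_of_mem hx)
    have ha0 : a = 0 := by linarith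
    intro x hx
    rcases Multiset.mem_cons.mp hx with h1 | h2
    · rw [h1, ha0]
    · exact ih (fun y hy => h y (Multiset.mem_cons_of_mem hy)) (by linarith) x h2

lemma newton_base {q : ℝ[X]} (hq : RRooted q) (hd : q.natDegree = 2) :
    q.coeff 0 * q.coeff 2 * (((2:ℕ).choose 1 : ℝ))^2 ≤
      q.coeff 1 ^ 2 * ((2:ℕ).choose 0) * ((2:ℕ).choose 2) := by
  have hcard : Multiset.card q.roots = 2 := by rw [hq, hd]
  obtain ⟨r, s, hrs⟩ := Multiset.card_eq_two.mp hcard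
  have h0 : q.coeff 0 = q.leadingCoeff * (-1)^2 * q.roots.esymm 2 := by
    have := coeff_eq_esymm_roots_of_card hq (by omega : 0 ≤ q.natDegree)
    rwa [hd] at this
  have h1 : q.coeff 1 = q.leadingCoeff * (-1)^1 * q.roots.esymm 1 := by
    have := coeff_eq_esymm_roots_of_card hq (by omega : 1 ≤ q.natDegree)
    rwa [hd] at this
  have he1 : q.roots.esymm 1 = r + s := by
    rw [hrs, mesymm_one]; simp
  have he2 : q.roots.esymm 2 = r * s := by
    rw [hrs, show ({r, s} : Multiset ℝ) = r ::ₘ {s} from rfl, mesymm_two_cons,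
      show ({s} : Multiset ℝ) = s ::ₘ 0 from rfl, mesymm_two_cons]
    simp [Multiset.esymm, Multiset.powersetCard_eq_empty 2 (by simp : Multiset.card (0 : Multiset ℝ) < 2)]
  have h2 : q.coeff 2 = q.leadingCoeff := by
    rw [← hd]; rfl
  rw [h0, h1, h2, he1, he2]
  simp only [Nat.choose_self, Nat.choose_one_right, Nat.choose_zero_right]
  push_cast
  nlinarith [sq_nonneg (q.leadingCoeff * (r - s)), sq_nonneg q.leadingCoeff]

lemma newton_top : ∀ e : ℕ, ∀ q : ℝ[X], RRooted q → q.natDegree = e + 2 →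
    q.coeff e * q.coeff (e+2) * (((e+2).choose (e+1) : ℝ))^2 ≤
      q.coeff (e+1) ^ 2 * ((e+2).choose e) * ((e+2).choose (e+2)) := by
  intro e
  induction e with
  | zero => intro q hq hd; exact newton_base hq hd
  | succ e ih =>
    intro q hq hd
    have hne : q.natDegree ≠ 0 := by omega
    have hd' : (derivative q).natDegree = e + 2 := by
      rw [natDegree_derivative_rr hq hne, hd]
      omega
    have IH := ih (derivative q) (rrooted_derivative hq) hd'
    rw [coeff_derivative, coeff_derivative, coeff_derivative] at IH
    -- choose values
    have c1 : (((e+2).choose (e+1) : ℕ) : ℝ) = (e:ℝ) + 2 := by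
      rw [Nat.choose_succ_self_right]; push_cast; ring
    have c2 : (((e+2).choose (e+2) : ℕ) : ℝ) = 1 := by simp
    have c3 : (((e+2).choose e : ℕ) : ℝ) = ((e:ℝ)+2) * ((e:ℝ)+1) / 2 := by
      have h := Nat.choose_symm (show 2 ≤ e+2 by omega)
      rw [show e+2-2 = e by omega] at h
      rw [h]
      rw [Nat.cast_choose_two]
      push_cast; ring
    have c4 : (((e+3).choose (e+2) : ℕ) : ℝ) = (e:ℝ) + 3 := by
      rw [Nat.choose_succ_self_right]; push_cast; ring
    have c5 : (((e+3).choose (e+3) : ℕ) : ℝ) = 1 := by simp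
    have c6 : (((e+3).choose (e+1) : ℕ) : ℝ) = ((e:ℝ)+3) * ((e:ℝ)+2) / 2 := by
      have h := Nat.choose_symm (show 2 ≤ e+3 by omega)
      rw [show e+3-2 = e+1 by omega] at h
      rw [h]
      rw [Nat.cast_choose_two]
      push_cast; ring
    rw [c1, c2, c3] at IH
    rw [show e + 1 + 2 = e + 3 from rfl, show e + 1 + 1 = e + 2 from rfl, c4, c5, c6]
    have hpos : (0:ℝ) < ((e:ℝ)+1) * ((e:ℝ)+2)^2 := by positivity
    rw [← mul_le_mul_iff_of_pos_right hpos]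
    have key := mul_le_mul_of_nonneg_right IH (by positivity : (0:ℝ) ≤ (e:ℝ)+3)
    push_cast at key ⊢
    nlinarith [key]

lemma cast_choose_succ_mul (D j : ℕ) :
    ((D+1).choose (j+1) : ℝ) * (j+1) = ((D:ℝ)+1) * (D.choose j : ℝ) := by
  have h := Nat.add_one_mul_choose_eq D j
  have : ((Nat.succ D * D.choose j : ℕ) : ℝ) = (((D+1).choose (j+1) * (j+1) : ℕ) : ℝ) := by
    rw [h]
  push_cast at this
  linarith

lemma newton_one {q : ℝ[X]} (hq : RRooted q) {d : ℕ} (hd : q.natDegree = d) (h2 : 2 ≤ d) :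
    q.coeff 0 * q.coeff 2 * ((d.choose 1 : ℝ))^2 ≤
      q.coeff 1 ^ 2 * (d.choose 0) * (d.choose 2) := by
  by_cases hc0 : q.coeff 0 = 0
  · rw [hc0]
    have : (0:ℝ) ≤ q.coeff 1 ^ 2 * (d.choose 0) * (d.choose 2) := by positivity
    linarith
  obtain ⟨hr1, hr2, _⟩ := reverse_props hq hc0
  obtain ⟨e, rfl⟩ : ∃ e, d = e + 2 := ⟨d - 2, by omega⟩
  have hrd : q.reverse.natDegree = e + 2 := by rw [hr2, hd]
  have key := newton_top e q.reverse hr1 hrd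
  rw [coeff_reverse, coeff_reverse, coeff_reverse, hd] at key
  rw [revAt_le (by omega), revAt_le (by omega), revAt_le (by omega)] at key
  rw [show e+2-e = 2 by omega, show e+2-(e+1) = 1 by omega, show e+2-(e+2) = 0 by omega] at key
  have c1 : ((e+2).choose (e+1) : ℝ) = ((e+2).choose 1 : ℝ) := by
    rw [Nat.choose_succ_self_right, Nat.choose_one_right]
  have c2 : ((e+2).choose e : ℝ) = ((e+2).choose 2 : ℝ) := by
    have h := Nat.choose_symm (show 2 ≤ e+2 by omega)
    rw [show e+2-2 = e by omega] at h
    rw [h]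
  have c3 : ((e+2).choose (e+2) : ℝ) = ((e+2).choose 0 : ℝ) := by simp
  rw [c1, c2, c3] at key
  nlinarith [key]

lemma newton_general : ∀ k, 1 ≤ k → ∀ d, ∀ q : ℝ[X], RRooted q → q.natDegree = d → k < d →
    q.coeff (k-1) * q.coeff (k+1) * ((d.choose k : ℝ))^2 ≤
      q.coeff k ^ 2 * (d.choose (k-1)) * (d.choose (k+1)) := by
  intro k hk
  induction k, hk using Nat.le_induction with
  | base =>
    intro d q hq hd hlt
    simpa using newton_one hq hd (by omega)
  | succ n hn ih =>
    obtain ⟨j, rfl⟩ : ∃ j, n = j + 1 := ⟨n - 1, by omega⟩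
    intro d q hq hd hlt
    obtain ⟨D, rfl⟩ : ∃ D, d = D + 1 := ⟨d - 1, by omega⟩
    have hne : q.natDegree ≠ 0 := by omega
    have hd' : (derivative q).natDegree = D := by
      rw [natDegree_derivative_rr hq hne, hd]
      omega
    have IH := ih D (derivative q) (rrooted_derivative hq) hd' (by omega)
    simp only [Nat.add_sub_cancel] at IH ⊢
    rw [coeff_derivative, coeff_derivative, coeff_derivative] at IH
    have A1 := cast_choose_succ_mul D (j+1)
    have A2 := cast_choose_succ_mul D j
    have A3 := cast_choose_succ_mul D (j+1+1)
    have hpos : (0:ℝ) < ((j:ℝ)+2)^2 * (((j:ℝ)+1) * ((j:ℝ)+3)) := by positivity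
    rw [← mul_le_mul_iff_of_pos_right hpos]
    have key := mul_le_mul_of_nonneg_right IH (by positivity : (0:ℝ) ≤ ((D:ℝ)+1)^2)
    push_cast at key A1 A2 A3 ⊢
    calc q.coeff (j+1) * q.coeff (j+1+1+1) * (((D+1).choose (j+1+1) : ℕ) : ℝ)^2 *
          (((j:ℝ)+2)^2 * (((j:ℝ)+1) * ((j:ℝ)+3)))
        = q.coeff (j + 1) * ((j:ℝ) + 1) * (q.coeff (j + 1 + 1 + 1) * ((j:ℝ) + 1 + 1 + 1)) *
            ((((D).choose (j+1) : ℕ) : ℝ))^2 * (((D:ℝ)+1)^2) := by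
          push_cast
          linear_combination (q.coeff (j+1) * q.coeff (j+1+1+1) * ((j:ℝ)+1) * ((j:ℝ)+3) *
            ((((D+1).choose (j+1+1) : ℕ) : ℝ) * ((j:ℝ)+2) + ((D:ℝ)+1) * (((D).choose (j+1) : ℕ) : ℝ))) * A1
      _ ≤ (q.coeff (j + 1 + 1) * ((j:ℝ) + 1 + 1)) ^ 2 * (((D).choose j : ℕ) : ℝ) *
            (((D).choose (j+1+1) : ℕ) : ℝ) * (((D:ℝ)+1)^2) := key
      _ = q.coeff (j+1+1)^2 * (((D+1).choose (j+1) : ℕ) : ℝ) * (((D+1).choose (j+1+1+1) : ℕ) : ℝ) *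
            (((j:ℝ)+2)^2 * (((j:ℝ)+1) * ((j:ℝ)+3))) := by
          push_cast
          linear_combination (-(q.coeff (j+1+1)^2 * ((j:ℝ)+2)^2)) *
              ((((D+1).choose (j+1+1+1) : ℕ) : ℝ) * ((j:ℝ)+3) * A2 +
                (((D:ℝ)+1) * (((D).choose j : ℕ) : ℝ)) * A3)

lemma consec_zero {q : ℝ[X]} (hq : RRooted q) (hd : 3 ≤ q.natDegree)
    (h1 : q.coeff 1 = 0) (h2 : q.coeff 2 = 0) : q.coeff 0 = 0 := by
  by_contra h0
  obtain ⟨hr1, hr2, hroots⟩ := reverse_props hq h0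
  obtain ⟨d, hdd⟩ : ∃ d, q.natDegree = d := ⟨_, rfl⟩
  rw [hdd] at hd hr2
  have hrevne : q.reverse ≠ 0 := by
    intro h
    rw [h] at hr2
    simp at hr2
    omega
  have hlc : q.reverse.leadingCoeff ≠ 0 := leadingCoeff_ne_zero.2 hrevne
  -- Vieta coefficients of reverse
  have v1 := coeff_eq_esymm_roots_of_card hr1 (show d - 1 ≤ q.reverse.natDegree by omega)
  have v2 := coeff_eq_esymm_roots_of_card hr1 (show d - 2 ≤ q.reverse.natDegree by omega)
  rw [coeff_reverse, hdd, revAt_le (by omega : d - 1 ≤ d), hr2] at v1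
  rw [coeff_reverse, hdd, revAt_le (by omega : d - 2 ≤ d), hr2] at v2
  rw [show d - (d - 1) = 1 by omega] at v1
  rw [show d - (d - 2) = 2 by omega] at v2
  rw [h1] at v1
  rw [h2] at v2
  have he1 : q.reverse.roots.esymm 1 = 0 := by
    rcases mul_eq_zero.mp v1.symm with h | h
    · rcases mul_eq_zero.mp h with h' | h'
      · exact absurd h' hlc
      · simp at h'
    · exact h
  have he2 : q.reverse.roots.esymm 2 = 0 := by
    rcases mul_eq_zero.mp v2.symm with h | h
    · rcases mul_eq_zero.mp h with h' | h'
      · exact absurd h' hlc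
      · simp at h'
    · exact h
  have hsumsq : (q.reverse.roots.map fun x => x ^ 2).sum = 0 := by
    rw [sum_sq_eq, ← mesymm_one, he1, he2]
    ring
  have hallz := multiset_all_zero _ (by
      intro x hx
      rw [Multiset.mem_map] at hx
      obtain ⟨y, _, rfl⟩ := hx
      positivity) hsumsq
  have hcard : 0 < Multiset.card q.reverse.roots := by
    rw [hr1, hr2]; omega
  obtain ⟨x, hx⟩ := Multiset.card_pos_iff_exists_mem.mp hcard
  have hx2 : x ^ 2 = 0 := hallz _ (Multiset.mem_map_of_mem _ hx)
  have hx0 : x = 0 := by nlinarith [hx2]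
  rw [hroots, Multiset.mem_map] at hx
  obtain ⟨r, hrm, hri⟩ := hx
  have hr0 : r = 0 := by
    rw [hx0] at hri
    exact inv_eq_zero.mp hri
  rw [hr0] at hrm
  have : q ≠ 0 := fun h => h0 (by simp [h])
  rw [mem_roots this] at hrm
  exact h0 (by rw [coeff_zero_eq_eval_zero]; exact hrm)

lemma iter_deriv_coeff : ∀ (t : ℕ) (q : ℝ[X]) (s : ℕ),
    (derivative^[t] q).coeff s = q.coeff (s + t) * ((s + t).descFactorial t : ℝ) := by
  intro t
  induction t with
  | zero => intro q s; simp
  | succ t ih =>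
    intro q s
    rw [Function.iterate_succ_apply', coeff_derivative, ih]
    rw [show s + 1 + t = s + (t + 1) by omega]
    rw [Nat.descFactorial_succ]
    rw [show s + (t+1) - t = s + 1 by omega]
    push_cast
    ring

lemma iter_deriv_rr : ∀ (t : ℕ) (q : ℝ[X]), RRooted q → t ≤ q.natDegree →
    RRooted (derivative^[t] q) ∧ (derivative^[t] q).natDegree = q.natDegree - t := by
  intro t
  induction t with
  | zero => intro q hq _; exact ⟨hq, by simp⟩
  | succ t ih =>
    intro q hq ht
    obtain ⟨h1, h2⟩ := ih q hq (by omega)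
    rw [Function.iterate_succ_apply']
    refine ⟨rrooted_derivative h1, ?_⟩
    rw [natDegree_derivative_rr h1 (by omega), h2]
    omega

noncomputable def fpoly (n : ℕ) (lam : Fin n → ℝ) : ℝ[X] := ∏ i : Fin n, (X + C (lam i))

lemma fpoly_natDegree (n : ℕ) (lam : Fin n → ℝ) : (fpoly n lam).natDegree = n := by
  rw [fpoly, natDegree_prod_of_monic _ _ fun i _ => monic_X_add_C _]
  simp [natDegree_X_add_C]

lemma fpoly_rr (n : ℕ) (lam : Fin n → ℝ) : RRooted (fpoly n lam) := by
  have h : fpoly n lam =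
      (Multiset.map (fun a => X - C a) (Finset.univ.val.map fun i => -lam i)).prod := by
    rw [Multiset.map_map]
    rw [fpoly, show (∏ i : Fin n, (X + C (lam i)))
        = ∏ i : Fin n, (X - C (-(lam i))) from Finset.prod_congr rfl fun i _ => by
      rw [map_neg, sub_neg_eq_add]]
    rfl
  rw [RRooted, h, roots_multiset_prod_X_sub_C, ← h, fpoly_natDegree]
  simp

lemma fpoly_coeff (n : ℕ) (lam : Fin n → ℝ) {k : ℕ} (hk : k ≤ n) :
    (fpoly n lam).coeff k = esymm n (n - k) lam := by
  rw [fpoly, Finset.prod_X_add_C_coeff _ _ (by simpa using hk), esymm]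
  congr 1
  simp

/-- Maclaurin inequality: for `λ` in the Gårding cone `Γ_m` and `1 ≤ p ≤ m ≤ n`,
`C(n,m)^{−1/m} H_m(λ)^{1/m} ≤ C(n,p)^{−1/p} H_p(λ)^{1/p}`. -/
theorem maclaurin (n m p : ℕ) (hp : 1 ≤ p) (hpm : p ≤ m) (hmn : m ≤ n)
    (lam : Fin n → ℝ)
    (hlam : ∀ j : ℕ, 1 ≤ j → j ≤ m → 0 ≤ esymm n j lam) :
    (n.choose m : ℝ) ^ (-(1 / (m : ℝ))) * esymm n m lam ^ (1 / (m : ℝ)) ≤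
      (n.choose p : ℝ) ^ (-(1 / (p : ℝ))) * esymm n p lam ^ (1 / (p : ℝ)) := by
  set e : ℕ → ℝ := fun j => esymm n j lam with he
  have hm1 : 1 ≤ m := le_trans hp hpm
  by_cases hem : e m = 0
  · rw [show esymm n m lam = e m from rfl, hem,
      Real.zero_rpow (one_div_ne_zero (show ((m:ℝ)) ≠ 0 by
        have : (0:ℝ) < (m:ℝ) := by exact_mod_cast hm1
        linarith))]
    rw [mul_zero]
    exact mul_nonneg (Real.rpow_nonneg (by positivity) _)
      (Real.rpow_nonneg (hlam p hp hpm) _)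
  -- e-level facts
  have he0 : e 0 = 1 := by
    simp [he, esymm]
  have newton_e : ∀ j, 1 ≤ j → j + 1 ≤ n →
      e (j-1) * e (j+1) * ((n.choose j : ℝ))^2 ≤ e j ^ 2 * (n.choose (j-1)) * (n.choose (j+1)) := by
    intro j h1 h2
    have hk1 : 1 ≤ n - j := by omega
    have hk2 : n - j < n := by omega
    have key := newton_general (n - j) hk1 n (fpoly n lam) (fpoly_rr n lam)
      (fpoly_natDegree n lam) hk2
    rw [fpoly_coeff n lam (show n - j - 1 ≤ n by omega),
      fpoly_coeff n lam (show n - j + 1 ≤ n by omega),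
      fpoly_coeff n lam (show n - j ≤ n by omega)] at key
    rw [show n - (n - j - 1) = j + 1 by omega, show n - (n - j + 1) = j - 1 by omega,
      show n - (n - j) = j by omega] at key
    have c1 : n.choose (n - j) = n.choose j := Nat.choose_symm (by omega)
    have c2 : n.choose (n - j - 1) = n.choose (j + 1) := by
      rw [show n - j - 1 = n - (j+1) by omega]
      exact Nat.choose_symm (by omega)
    have c3 : n.choose (n - j + 1) = n.choose (j - 1) := by
      rw [show n - j + 1 = n - (j-1) by omega]
      exact Nat.choose_symm (by omega)
    rw [c1, c2, c3] at key
    nlinarith [key]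
  have zero_e : ∀ j, 2 ≤ j → j + 1 ≤ n → e (j-1) = 0 → e j = 0 → e (j+1) = 0 := by
    intro j h2 hj1 ha hb
    obtain ⟨hrr, hdeg⟩ := iter_deriv_rr (n - j - 1) (fpoly n lam) (fpoly_rr n lam)
      (by rw [fpoly_natDegree]; omega)
    rw [fpoly_natDegree] at hdeg
    set h : ℝ[X] := derivative^[n - j - 1] (fpoly n lam) with hh
    have hdeg3 : h.natDegree = j + 1 := by rw [hdeg]; omega
    have hc1 : h.coeff 1 = 0 := by
      rw [hh, iter_deriv_coeff, fpoly_coeff n lam (show 1 + (n-j-1) ≤ n by omega),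
        show n - (1 + (n - j - 1)) = j by omega, show esymm n j lam = e j from rfl, hb, zero_mul]
    have hc2 : h.coeff 2 = 0 := by
      rw [hh, iter_deriv_coeff, fpoly_coeff n lam (show 2 + (n-j-1) ≤ n by omega),
        show n - (2 + (n - j - 1)) = j - 1 by omega,
        show esymm n (j-1) lam = e (j-1) from rfl, ha, zero_mul]
    have hc0 := consec_zero hrr (by omega) hc1 hc2
    rw [hh, iter_deriv_coeff, fpoly_coeff n lam (show 0 + (n-j-1) ≤ n by omega),
      show n - (0 + (n - j - 1)) = j + 1 by omega,
      show esymm n (j+1) lam = e (j+1) from rfl] at hc0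
    have hpos : (0:ℝ) < ((0 + (n - j - 1)).descFactorial (n - j - 1) : ℝ) := by
      have hne : (0 + (n - j - 1)).descFactorial (n - j - 1) ≠ 0 := fun hz => by
        have := Nat.descFactorial_eq_zero_iff_lt.mp hz
        omega
      exact_mod_cast Nat.pos_of_ne_zero hne
    rcases mul_eq_zero.mp hc0 with h | h
    · exact h
    · linarith
  -- positivity of all e j, j ≤ m
  have hepos : ∀ j, j ≤ m → 0 < e j := by
    have claim : ∀ i, i ≤ m → 0 < e (m - i) := by
      intro i
      induction i with
      | zero =>
        intro _
        have : (0:ℝ) ≤ e m := hlam m hm1 le_rfl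
        rcases lt_or_eq_of_le this with h | h
        · simpa using h
        · exact absurd h.symm hem
      | succ i ih =>
        intro hi
        have hprev := ih (by omega)
        rcases Nat.eq_zero_or_pos (m - (i+1)) with h0 | h0
        · rw [h0, he0]; norm_num
        set j := m - (i + 1) with hj
        have hj1 : j + 1 = m - i := by omega
        by_contra hcon
        push_neg at hcon
        have hjge : 0 ≤ e j := hlam j (by omega) (by omega)
        have hej : e j = 0 := le_antisymm hcon hjge
        have hN := newton_e j (by omega) (by omega)
        rw [hej] at hN
        have hC2 : (0:ℝ) < ((n.choose j : ℝ))^2 := by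
          have : (0:ℝ) < (n.choose j : ℝ) := by
            exact_mod_cast Nat.choose_pos (show j ≤ n by omega)
          positivity
        have hprod : e (j-1) * e (j+1) ≤ 0 := by
          refine (mul_le_mul_iff_of_pos_right hC2).mp ?_
          rw [zero_mul]
          nlinarith [hN]
        have hjp1 : 0 < e (j+1) := by rw [hj1]; exact hprev
        have hjm1 : e (j-1) ≤ 0 := by nlinarith
        rcases Nat.lt_or_ge j 2 with hj2 | hj2
        · -- j = 1
          have : j = 1 := by omega
          rw [this] at hjm1
          norm_num at hjm1
          rw [he0] at hjm1
          linarith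
        · have hjm0 : e (j-1) = 0 := by
            have : (0:ℝ) ≤ e (j - 1) := hlam (j-1) (by omega) (by omega)
            linarith
          have := zero_e j hj2 (by omega) hjm0 hej
          linarith
    intro j hj
    have := claim (m - j) (by omega)
    rwa [show m - (m - j) = j by omega] at this
  -- normalized symmetric means
  set E : ℕ → ℝ := fun j => e j / (n.choose j : ℝ) with hEdef
  have hchoosepos : ∀ j, j ≤ n → (0:ℝ) < (n.choose j : ℝ) := fun j hj => by
    exact_mod_cast Nat.choose_pos hj
  have hEpos : ∀ j, j ≤ m → 0 < E j := fun j hj =>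
    div_pos (hepos j hj) (hchoosepos j (by omega))
  have hE0 : E 0 = 1 := by
    show e 0 / (n.choose 0 : ℝ) = 1
    rw [he0]
    simp
  have newton_E : ∀ j, 1 ≤ j → j + 1 ≤ m → E (j-1) * E (j+1) ≤ E j ^ 2 := by
    intro j h1 h2
    have key := newton_e j h1 (by omega)
    have p1 := hchoosepos (j-1) (by omega)
    have p2 := hchoosepos j (by omega)
    have p3 := hchoosepos (j+1) (by omega)
    show e (j-1) / _ * (e (j+1) / _) ≤ (e j / _) ^ 2
    rw [div_mul_div_comm, div_pow, div_le_div_iff₀ (by positivity) (by positivity)]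
    nlinarith [key]
  have Rchain : ∀ k, 1 ≤ k → k + 1 ≤ m → E (k+1) ^ k ≤ E k ^ (k+1) := by
    intro k hk
    induction k, hk using Nat.le_induction with
    | base =>
      intro h2
      have hN := newton_E 1 le_rfl h2
      rw [hE0, one_mul] at hN
      simpa using hN
    | succ k hk ih =>
      intro hk2
      have hIH := ih (by omega)
      have hN := newton_E (k+1) (by omega) (by omega)
      simp only [Nat.add_sub_cancel] at hN
      have ha := hEpos k (by omega)
      have hb := hEpos (k+1) (by omega)
      have hc := hEpos (k+2) (by omega)
      have h1 : (E k * E (k+2)) ^ (k+1) ≤ (E (k+1) ^ 2) ^ (k+1) :=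
        pow_le_pow_left₀ (by positivity) (by rw [show k+1+1 = k+2 from rfl] at hN; exact hN) _
      rw [mul_pow, ← pow_mul] at h1
      have h2 : E (k+1) ^ (2 * (k+1)) = E (k+1) ^ (k+2) * E (k+1) ^ k := by
        rw [← pow_add]
        congr 1
        omega
      have h4 : E (k+2) ^ (k+1) * E k ^ (k+1) ≤ E (k+1) ^ (k+2) * E k ^ (k+1) := by
        calc E (k+2) ^ (k+1) * E k ^ (k+1) = E k ^ (k+1) * E (k+2) ^ (k+1) := by ring
          _ ≤ E (k+1) ^ (2*(k+1)) := h1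
          _ = E (k+1) ^ (k+2) * E (k+1) ^ k := h2
          _ ≤ E (k+1) ^ (k+2) * E k ^ (k+1) :=
            mul_le_mul_of_nonneg_left hIH (by positivity)
      exact le_of_mul_le_mul_right h4 (pow_pos ha (k+1))
  have rpow_step : ∀ k, 1 ≤ k → k + 1 ≤ m →
      E (k+1) ^ (1/((k:ℝ)+1)) ≤ E k ^ (1/(k:ℝ)) := by
    intro k hk hk1
    have hR := Rchain k hk hk1
    have ha := hEpos k (by omega)
    have hb := hEpos (k+1) (by omega)
    have hkpos : (0:ℝ) < (k:ℝ) := by exact_mod_cast hk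
    have h := Real.rpow_le_rpow (by positivity) hR
      (by positivity : (0:ℝ) ≤ 1/((k:ℝ)*((k:ℝ)+1)))
    rw [← Real.rpow_natCast (E (k+1)) k, ← Real.rpow_natCast (E k) (k+1),
      ← Real.rpow_mul hb.le, ← Real.rpow_mul ha.le] at h
    rw [show ((k:ℕ):ℝ) * (1/((k:ℝ)*((k:ℝ)+1))) = 1/((k:ℝ)+1) by
        field_simp,
      show (((k:ℕ)+1:ℕ):ℝ) * (1/((k:ℝ)*((k:ℝ)+1))) = 1/(k:ℝ) by
        push_cast
        field_simp] at h
    exact h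
  have chain : ∀ k, p ≤ k → k ≤ m → E k ^ (1/(k:ℝ)) ≤ E p ^ (1/(p:ℝ)) := by
    intro k hpk
    induction k, hpk using Nat.le_induction with
    | base => intro _; exact le_rfl
    | succ k hk ih =>
      intro hk1
      have step := rpow_step k (by omega) (by omega)
      have := ih (by omega)
      calc E (k+1) ^ (1/(((k:ℕ)+1:ℕ):ℝ)) = E (k+1) ^ (1/((k:ℝ)+1)) := by push_cast; ring_nf
        _ ≤ E k ^ (1/(k:ℝ)) := step
        _ ≤ E p ^ (1/(p:ℝ)) := this
  have conv : ∀ j, 1 ≤ j → j ≤ m →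
      (n.choose j : ℝ) ^ (-(1/(j:ℝ))) * esymm n j lam ^ (1/(j:ℝ)) = E j ^ (1/(j:ℝ)) := by
    intro j h1 h2
    show _ = (e j / (n.choose j : ℝ)) ^ (1/(j:ℝ))
    rw [Real.div_rpow (le_of_lt (hepos j h2)) (le_of_lt (hchoosepos j (by omega))),
      Real.rpow_neg (le_of_lt (hchoosepos j (by omega)))]
    rw [div_eq_mul_inv, mul_comm]
    rfl
  rw [conv m hm1 le_rfl, conv p hp hpm]
  exact chain m hpm le_rfl
end

section
/- For positive semidefinite symmetric n × n real matrices A, one has (det A)^{1/n} = inf { tr(HA) : H symmetric positive definite with det H = n^{−n} }. -/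
open Matrix Finset
open scoped MatrixOrder

/-- trace of a real psd matrix equals sum of eigenvalues -/
lemma trace_eq_sum_eigs {n : ℕ} (M : Matrix (Fin n) (Fin n) ℝ) (hM : M.IsHermitian) :
    M.trace = ∑ i, hM.eigenvalues i := by
  conv_lhs => rw [hM.spectral_theorem]
  rw [Unitary.conjStarAlgAut_apply, Matrix.trace_mul_cycle, Unitary.coe_star_mul_self, Matrix.one_mul, Matrix.trace_diagonal]
  simp [RCLike.ofReal]

lemma psd_det_nonneg {n : ℕ} (M : Matrix (Fin n) (Fin n) ℝ) (hM : M.PosSemidef) :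
    (0:ℝ) ≤ M.det := by
  have := hM.1.det_eq_prod_eigenvalues
  simp only [RCLike.ofReal_real_eq_id, id_eq, Function.comp] at this
  rw [this]
  exact Finset.prod_nonneg fun i _ => hM.eigenvalues_nonneg i

lemma amgm_matrix {n : ℕ} (hn : 0 < n) (M : Matrix (Fin n) (Fin n) ℝ) (hM : M.PosSemidef) :
    M.det ^ ((n : ℝ)⁻¹) ≤ (n : ℝ)⁻¹ * M.trace := by
  have hμ : ∀ i ∈ Finset.univ, (0:ℝ) ≤ hM.1.eigenvalues i := fun i _ => hM.eigenvalues_nonneg i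
  have hdet : M.det = ∏ i, hM.1.eigenvalues i := by
    have := hM.1.det_eq_prod_eigenvalues
    simpa using this
  have htr : M.trace = ∑ i, hM.1.eigenvalues i := trace_eq_sum_eigs M hM.1
  have hw : ∑ _i : Fin n, (n:ℝ)⁻¹ = 1 := by
    simp [Finset.sum_const, mul_inv_cancel₀ (by exact_mod_cast hn.ne' : (n:ℝ) ≠ 0)]
  have := Real.geom_mean_le_arith_mean_weighted Finset.univ (fun _ => (n:ℝ)⁻¹)
    (hM.1.eigenvalues) (fun i _ => by positivity) hw hμ
  calc M.det ^ ((n : ℝ)⁻¹) = ∏ i, hM.1.eigenvalues i ^ ((n:ℝ)⁻¹) := by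
        rw [hdet, ← Real.finset_prod_rpow _ _ hμ]
    _ ≤ ∑ i, (n:ℝ)⁻¹ * hM.1.eigenvalues i := this
    _ = (n:ℝ)⁻¹ * M.trace := by rw [htr, Finset.mul_sum]

/-- lower bound: every element of the set dominates `det A ^ (1/n)` -/
lemma trace_lower_bound {n : ℕ} (hn : 0 < n) (A H : Matrix (Fin n) (Fin n) ℝ)
    (hA : A.PosSemidef) (hH : H.PosDef) (hdetH : H.det = ((n : ℝ) ^ n)⁻¹) :
    A.det ^ ((n : ℝ)⁻¹) ≤ (H * A).trace := by
  have hnR : (0:ℝ) < n := by exact_mod_cast hn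
  set S := CFC.sqrt H with hS
  have hSpsd : S.PosSemidef := (CFC.sqrt_nonneg H).posSemidef
  have hSS : S * S = H := CFC.sqrt_mul_sqrt_self H hH.posSemidef.nonneg
  set M := S * A * S with hMdef
  have hMpsd : M.PosSemidef := by
    have : S * A * Sᴴ = M := by rw [hSpsd.1]
    exact this ▸ hA.mul_mul_conjTranspose_same S
  have htr : M.trace = (H * A).trace := by
    rw [hMdef, Matrix.trace_mul_cycle, hSS]
  have hdetM : M.det = ((n : ℝ) ^ n)⁻¹ * A.det := by
    have h1 : M.det = S.det * A.det * S.det := by rw [hMdef, Matrix.det_mul, Matrix.det_mul]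
    have h2 : S.det * S.det = H.det := by rw [← Matrix.det_mul, hSS]
    rw [h1, ← hdetH, ← h2]; ring
  have key := amgm_matrix hn M hMpsd
  have hdetA : (0:ℝ) ≤ A.det := psd_det_nonneg A hA
  have h1 : (((n:ℝ)^n)⁻¹) ^ ((n:ℝ)⁻¹) = (n:ℝ)⁻¹ := by
    rw [← Real.rpow_natCast (n:ℝ) n, Real.inv_rpow (Real.rpow_nonneg hnR.le _),
      ← Real.rpow_mul hnR.le, mul_inv_cancel₀ (by exact_mod_cast hn.ne' : (n:ℝ) ≠ 0),
      Real.rpow_one]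
  have hpow : M.det ^ ((n:ℝ)⁻¹) = (n:ℝ)⁻¹ * A.det ^ ((n:ℝ)⁻¹) := by
    rw [hdetM, Real.mul_rpow (by positivity) hdetA, h1]
  rw [hpow, htr] at key
  exact le_of_mul_le_mul_left key (inv_pos.mpr hnR)

/-- For a real symmetric positive semidefinite `n × n` matrix `A`,
`(det A)^{1/n} = inf { tr(HA) : H symmetric positive definite, det H = n^{−n} }`. -/
theorem det_rpow_eq_inf_trace (n : ℕ) (hn : 0 < n)
    (A : Matrix (Fin n) (Fin n) ℝ) (hA : A.PosSemidef) :
    A.det ^ ((n : ℝ)⁻¹) =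
      sInf {t : ℝ | ∃ H : Matrix (Fin n) (Fin n) ℝ,
        H.IsSymm ∧ H.PosDef ∧ H.det = ((n : ℝ) ^ n)⁻¹ ∧ t = (H * A).trace} := by
  set Sset := {t : ℝ | ∃ H : Matrix (Fin n) (Fin n) ℝ,
        H.IsSymm ∧ H.PosDef ∧ H.det = ((n : ℝ) ^ n)⁻¹ ∧ t = (H * A).trace} with hSset
  have hnR : (0:ℝ) < n := by exact_mod_cast hn
  have hnne : (n:ℝ) ≠ 0 := hnR.ne'
  have hlb : ∀ t ∈ Sset, A.det ^ ((n:ℝ)⁻¹) ≤ t := by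
    rintro t ⟨H, _, hHpd, hHdet, rfl⟩
    exact trace_lower_bound hn A H hA hHpd hHdet
  have hbdd : BddBelow Sset := ⟨A.det ^ ((n:ℝ)⁻¹), hlb⟩
  by_cases hdet : A.det = 0
  · -- singular case
    have hne : ((n:ℝ)⁻¹ : ℝ) ≠ 0 := inv_ne_zero hnne
    obtain ⟨v, hv0, hAv⟩ := Matrix.exists_mulVec_eq_zero_iff.mpr hdet
    have hvv : (0:ℝ) < v ⬝ᵥ v := by
      simpa using Matrix.dotProduct_star_self_pos_iff.mpr hv0
    have hT : (0:ℝ) ≤ A.trace := by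
      rw [trace_eq_sum_eigs A hA.1]
      exact Finset.sum_nonneg fun i _ => hA.eigenvalues_nonneg i
    have mem : ∀ ε : ℝ, 0 < ε → ∃ t ∈ Sset, t ≤ ε := by
      intro ε hε
      set T := A.trace
      set δ : ℝ := min (n:ℝ)⁻¹ (ε/(T+1)) with hδdef
      have hδ : 0 < δ := lt_min (by positivity) (by positivity)
      have hδn : δ ≤ (n:ℝ)⁻¹ := min_le_left _ _
      have hδpow : δ ^ n ≤ ((n:ℝ) ^ n)⁻¹ := by
        calc δ ^ n ≤ ((n:ℝ)⁻¹) ^ n := pow_le_pow_left₀ hδ.le hδn n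
          _ = ((n:ℝ) ^ n)⁻¹ := by rw [inv_pow]
      set c : ℝ := (((n:ℝ) ^ n)⁻¹ / δ ^ n - 1) / (v ⬝ᵥ v) with hcdef
      have hc : 0 ≤ c := by
        apply div_nonneg _ hvv.le
        rw [sub_nonneg, le_div_iff₀ (pow_pos hδ n), one_mul]
        exact hδpow
      set w : Fin n → ℝ := Real.sqrt (δ * c) • v with hwdef
      have hww : w ⬝ᵥ w = δ * c * (v ⬝ᵥ v) := by
        rw [hwdef, smul_dotProduct, dotProduct_smul, smul_eq_mul, smul_eq_mul, ← mul_assoc,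
          Real.mul_self_sqrt (by positivity)]
      have hvA : v ᵥ* A = 0 := by
        have hsymm : Aᵀ = A := by
          have h := hA.1
          rw [Matrix.IsHermitian, Matrix.conjTranspose_eq_transpose_of_trivial] at h
          exact h
        rw [← hsymm, Matrix.vecMul_transpose, hAv]
      have hwA : w ᵥ* A = 0 := by
        rw [hwdef, Matrix.smul_vecMul, hvA, smul_zero]
      have hcvv : c * (v ⬝ᵥ v) = ((n:ℝ) ^ n)⁻¹ / δ ^ n - 1 := by
        rw [hcdef, div_mul_cancel₀ _ hvv.ne']
      clear_value w
      clear_value c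
      set H : Matrix (Fin n) (Fin n) ℝ :=
        δ • (1 : Matrix (Fin n) (Fin n) ℝ) + replicateCol (Fin 1) w * replicateRow (Fin 1) w with hHdef
      have hHsymm : H.IsSymm := by
        rw [Matrix.IsSymm, hHdef, Matrix.transpose_add, Matrix.transpose_smul,
          Matrix.transpose_one, Matrix.transpose_mul, Matrix.transpose_replicateCol, Matrix.transpose_replicateRow]
      have hHpd : H.PosDef := by
        have h1 : (δ • (1 : Matrix (Fin n) (Fin n) ℝ)).PosDef := by
          rw [Matrix.smul_one_eq_diagonal]
          exact Matrix.posDef_diagonal_iff.mpr fun _ => hδ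
        have h2 : (replicateCol (Fin 1) w * replicateRow (Fin 1) w).PosSemidef := by
          have := Matrix.posSemidef_self_mul_conjTranspose (replicateCol (Fin 1) w)
          simpa [Matrix.conjTranspose_replicateCol] using this
        exact h1.add_posSemidef h2
      have hHdet : H.det = ((n:ℝ) ^ n)⁻¹ := by
        have hH' : H = δ • ((1 : Matrix (Fin n) (Fin n) ℝ)
            + replicateCol (Fin 1) (δ⁻¹ • w) * replicateRow (Fin 1) w) := by
          have hcs : replicateCol (Fin 1) (δ⁻¹ • w) * replicateRow (Fin 1) w
              = δ⁻¹ • (replicateCol (Fin 1) w * replicateRow (Fin 1) w) := by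
            rw [Matrix.replicateCol_smul, Matrix.smul_mul]
          rw [hHdef, smul_add, hcs, smul_smul, mul_inv_cancel₀ hδ.ne', one_smul]
        rw [hH', Matrix.det_smul]
        erw [Matrix.det_one_add_replicateCol_mul_replicateRow (ι := Fin 1) (δ⁻¹ • w) w]
        rw [dotProduct_smul,
          smul_eq_mul, hww, Fintype.card_fin]
        have h3 : 1 + δ⁻¹ * (δ * c * (v ⬝ᵥ v)) = ((n:ℝ) ^ n)⁻¹ / δ ^ n := by
          have h4 : δ⁻¹ * (δ * c * (v ⬝ᵥ v)) = c * (v ⬝ᵥ v) := by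
            field_simp
          rw [h4, hcvv]; ring
        rw [h3]
        field_simp
      have htr : (H * A).trace = δ * A.trace := by
        have hrowA : replicateRow (Fin 1) w * A = 0 := by
          rw [← Matrix.replicateRow_vecMul, hwA, Matrix.replicateRow_zero]
        rw [hHdef, Matrix.add_mul, Matrix.smul_mul, Matrix.one_mul, Matrix.mul_assoc, hrowA,
          Matrix.mul_zero, add_zero, Matrix.trace_smul, smul_eq_mul]
      refine ⟨δ * A.trace, ⟨H, hHsymm, hHpd, hHdet, htr.symm⟩, ?_⟩
      calc δ * A.trace ≤ (ε/(A.trace+1)) * A.trace :=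
            mul_le_mul_of_nonneg_right (min_le_right _ _) hT
        _ ≤ ε := by
            rw [div_mul_eq_mul_div, div_le_iff₀ (by positivity)]
            nlinarith
    rw [hdet, Real.zero_rpow hne]
    obtain ⟨t₀, ht₀, _⟩ := mem 1 one_pos
    refine le_antisymm ?_ ?_
    · refine le_csInf ⟨t₀, ht₀⟩ fun t ht => ?_
      have := hlb t ht
      rwa [hdet, Real.zero_rpow hne] at this
    · refine le_of_forall_pos_le_add fun ε hε => ?_
      obtain ⟨t, ht, htε⟩ := mem ε hε
      calc sInf Sset ≤ t := csInf_le hbdd ht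
        _ ≤ 0 + ε := by linarith
  · -- positive definite case
    have hApd : A.PosDef := by
      refine PosDef.of_dotProduct_mulVec_pos hA.1 fun x hx => ?_
      rcases lt_or_eq_of_le (hA.dotProduct_mulVec_nonneg x) with h | h
      · exact h
      · exact absurd (Matrix.exists_mulVec_eq_zero_iff.mp
          ⟨x, hx, (hA.dotProduct_mulVec_zero_iff x).mp h.symm⟩) hdet
    have hdetpos : 0 < A.det := hApd.det_pos
    set d : ℝ := A.det ^ ((n:ℝ)⁻¹) with hddef
    have hdpos : 0 < d := Real.rpow_pos_of_pos hdetpos _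
    set c : ℝ := d * (n:ℝ)⁻¹ with hcdef
    have hcpos : 0 < c := by positivity
    set H : Matrix (Fin n) (Fin n) ℝ := c • A⁻¹ with hHdef
    have hAinv : A⁻¹.PosDef := hApd.inv
    have hHpd : H.PosDef := by
      refine PosDef.of_dotProduct_mulVec_pos ?_ fun x hx => ?_
      · rw [hHdef, Matrix.IsHermitian, Matrix.conjTranspose_smul, hAinv.1]
        simp
      · rw [hHdef, Matrix.smul_mulVec, dotProduct_smul, smul_eq_mul]
        exact mul_pos hcpos (hAinv.dotProduct_mulVec_pos hx)
    have hHsymm : H.IsSymm := by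
      rw [Matrix.IsSymm, hHdef, Matrix.transpose_smul]
      congr 1
      have := hAinv.1
      rw [Matrix.IsHermitian] at this
      simpa using this
    have hHdet : H.det = ((n:ℝ) ^ n)⁻¹ := by
      rw [hHdef, Matrix.det_smul, Matrix.det_nonsing_inv, Fintype.card_fin, hcdef, hddef]
      rw [mul_pow, ← Real.rpow_natCast (A.det ^ ((n:ℝ)⁻¹)) n, ← Real.rpow_mul hdetpos.le,
        inv_mul_cancel₀ (by exact_mod_cast hn.ne' : (n:ℝ) ≠ 0), Real.rpow_one,
        Ring.inverse_eq_inv, inv_pow]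
      field_simp
    have hHtr : (H * A).trace = d := by
      rw [hHdef, Matrix.smul_mul, Matrix.nonsing_inv_mul A hdetpos.ne'.isUnit,
        Matrix.trace_smul, Matrix.trace_one, smul_eq_mul, hcdef, Fintype.card_fin]
      field_simp
    refine le_antisymm (le_csInf ⟨d, H, hHsymm, hHpd, hHdet, hHtr.symm⟩ hlb) ?_
    exact csInf_le hbdd ⟨H, hHsymm, hHpd, hHdet, hHtr.symm⟩
end
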